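/- Let (s,t) be an edge with s<t. Suppose an execution contains configurations L_0 and L_1 with L_0 ↦* L_1 such that: s executes at least one t-rule in some transition occurring before L_0; r_{st} = (You,0) in L_0; and (p_s, m_s) = (t,2) in L_1. Then s executes a t-Increase that sets m_s to 2 in some transition occurring between L_0 and L_1. -/

import Mathlib

/-!
Formal model of the self-stabilizing maximal-matching algorithm in the
link-register model under read/write atomicity.

Nodes form a finite simple graph `G` on a vertex type `V` whose linear order
plays the role of the distinct identifiers.  A configuration records, for each
node `u`, its pointer `p u : Option V` (`none` = null), its lock variable
`m u : Fin 3`, and for each (directed) link a register `r u v : RegFlag × Fin 3`.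
-/

inductive RegFlag where
  | Idle | You | Other
deriving DecidableEq

abbrev RegVal : Type := RegFlag × Fin 3

inductive Rule (V : Type) where
  | write (a : V)
  | seduction (a : V)
  | marriage (a : V)
  | increase
  | reset
deriving DecidableEq

structure Config (V : Type) where
  p : V → Option V
  m : V → Fin 3
  r : V → V → RegVal

variable {V : Type}

def correctRegisterValue [DecidableEq V] (C : Config V) (u a : V) : RegVal :=
  match C.p u with
  | none => (RegFlag.Idle, 0)
  | some b => if b = a then (RegFlag.You, C.m u) else (RegFlag.Other, C.m u)

def PRabandonment [LinearOrder V] (C : Config V) (u : V) : Prop :=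
  ∃ v, C.p u = some v ∧
    (((C.r v u).1 ≠ RegFlag.You ∧ (v < u ∨ C.m u ≠ 0)) ∨
     (C.r v u = (RegFlag.Other, 2) ∧ u < v))

def PRreset [LinearOrder V] (C : Config V) (u : V) : Prop :=
  ∃ v, C.p u = some v ∧ (C.r v u).1 = RegFlag.You ∧
    ((C.m u = 0 ∧ (C.r v u).2 = 2) ∨
     (C.m u = 2 ∧ (C.r v u).2 = 0) ∨
     (C.m u = 0 ∧ (C.r v u).2 = 1 ∧ v < u) ∨
     (C.m u = 1 ∧ (C.r v u).2 = 0 ∧ u < v) ∨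
     (C.m u = 1 ∧ (C.r v u).2 = 2 ∧ u < v) ∨
     (C.m u = 2 ∧ (C.r v u).2 = 1 ∧ v < u))

/-- The guard of each rule of node `u` in configuration `C`. -/
def eligible [LinearOrder V] (G : SimpleGraph V) (C : Config V) (u : V) : Rule V → Prop
  | .write a => G.Adj u a ∧ C.r u a ≠ correctRegisterValue C u a
  | .seduction a => G.Adj u a ∧ C.p u = none ∧ C.r u a = correctRegisterValue C u a ∧
      C.r a u = (RegFlag.Idle, 0) ∧ u < a
  | .marriage a => G.Adj u a ∧ C.p u = none ∧ C.r u a = correctRegisterValue C u a ∧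
      C.r a u = (RegFlag.You, 0) ∧ a < u
  | .increase => ∃ v, C.p u = some v ∧ C.r u v = correctRegisterValue C u v ∧
      (C.r v u).1 = RegFlag.You ∧
      ((C.m u = 0 ∧ ((u < v ∧ (C.r v u).2 = 1) ∨ (v < u ∧ (C.r v u).2 = 0))) ∨
       (C.m u = 1 ∧ ((u < v ∧ (C.r v u).2 = 1) ∨ (v < u ∧ (C.r v u).2 = 2))))
  | .reset => ∃ v, C.p u = some v ∧ C.r u v = correctRegisterValue C u v ∧
      (PRabandonment C u ∨ PRreset C u)

/-- Simultaneous application of (at most) one rule per node.  `A u = some R`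
means node `u` executes rule `R`; each action only modifies the data owned by
the acting node. -/
def step [DecidableEq V] (C : Config V) (A : V → Option (Rule V)) : Config V where
  p u :=
    match A u with
    | some (Rule.seduction a) => some a
    | some (Rule.marriage a) => some a
    | some Rule.reset => none
    | _ => C.p u
  m u :=
    match A u with
    | some (Rule.seduction _) => 0
    | some (Rule.marriage _) => 0
    | some Rule.reset => 0
    | some Rule.increase => C.m u + 1
    | _ => C.m u
  r u a :=
    match A u with
    | some (Rule.write b) => if a = b then correctRegisterValue C u a else C.r u a
    | _ => C.r u a

/-- An execution `C_0, A_0, C_1, A_1, …, C_T`: at each transition `i < T`, a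
nonempty set of eligible rules (at most one per node) is executed
simultaneously. -/
structure Execution [LinearOrder V] (G : SimpleGraph V) where
  T : ℕ
  conf : ℕ → Config V
  act : ℕ → V → Option (Rule V)
  act_nonempty : ∀ i < T, ∃ u, (act i u).isSome
  act_eligible : ∀ i < T, ∀ u R, act i u = some R → eligible G (conf i) u R
  conf_succ : ∀ i < T, conf (i + 1) = step (conf i) (act i)

/-- A configuration is stable if no rule is eligible at any node. -/
def stableConfig [LinearOrder V] (G : SimpleGraph V) (C : Config V) : Prop :=
  ∀ u R, ¬ eligible G C u R

/-- The edge `(s,t)` (with `s < t` intended) is in state `(You, α, β)`. -/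
def edgeState (C : Config V) (s t : V) (α β : Fin 3) : Prop :=
  C.p s = some t ∧ C.p t = some s ∧ C.m s = α ∧ C.m t = β

def updatedCorrectState (C : Config V) (s t : V) (α β : Fin 3) : Prop :=
  edgeState C s t α β ∧ C.r s t = (RegFlag.You, α) ∧ C.r t s = (RegFlag.You, β) ∧
    ((α, β) = ((0 : Fin 3), (0 : Fin 3)) ∨ (α, β) = (0, 1) ∨ (α, β) = (1, 1) ∨
     (α, β) = (2, 1) ∨ (α, β) = (2, 2))

def toUpdateCorrectState (C : Config V) (s t : V) (α β : Fin 3) : Prop :=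
  edgeState C s t α β ∧
    ((((α, β) = ((0 : Fin 3), (1 : Fin 3)) ∨ (α, β) = (2, 2)) ∧
        C.r s t = (RegFlag.You, α) ∧ C.r t s = (RegFlag.You, β - 1)) ∨
     (((α, β) = ((1 : Fin 3), (1 : Fin 3)) ∨ (α, β) = (2, 1)) ∧
        C.r s t = (RegFlag.You, α - 1) ∧ C.r t s = (RegFlag.You, β)))

def correctState (C : Config V) (s t : V) (α β : Fin 3) : Prop :=
  updatedCorrectState C s t α β ∨ toUpdateCorrectState C s t α β

/-- Node `u` executes a `v`-rule in transition `k`: one of `Write(v)`,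
`Seduction(v)`, `Marriage(v)`, a `v`-`Increase` or a `v`-`Reset`. -/
def execVRule [LinearOrder V] {G : SimpleGraph V} (E : Execution G) (k : ℕ) (u v : V) : Prop :=
  k < E.T ∧
    (E.act k u = some (Rule.write v) ∨ E.act k u = some (Rule.seduction v) ∨
     E.act k u = some (Rule.marriage v) ∨
     ((E.act k u = some Rule.increase ∨ E.act k u = some Rule.reset) ∧
       (E.conf k).p u = some v))

/-- Auxiliary invariant: if `r_{st} = (You,0)` then not (`p_s = t` and `m_s = 2`). -/
def Q0 [LinearOrder V] (C : Config V) (s t : V) : Prop :=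
  C.r s t = (RegFlag.You, 0) → ¬ (C.p s = some t ∧ C.m s = 2)

lemma fin3_add_eq_two {x : Fin 3} (h : x + 1 = 2) : x = 1 := by
  revert h; revert x; decide

lemma q0_step {V : Type} [LinearOrder V] {G : SimpleGraph V} (E : Execution G)
    (s t : V) (k : ℕ) (hk : k < E.T)
    (hQ : Q0 (E.conf k) s t ∨ execVRule E k s t) :
    Q0 (E.conf (k + 1)) s t := by
  have hsucc := E.conf_succ k hk
  intro hr hpm
  obtain ⟨hp, hm⟩ := hpm
  rw [hsucc] at hr hp hm
  cases hA : E.act k s with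
  | none =>
    simp only [step, hA] at hr hp hm
    rcases hQ with hQ | hV
    · exact hQ hr ⟨hp, hm⟩
    · rcases hV.2 with h | h | h | ⟨h | h, _⟩ <;> rw [hA] at h <;> exact nomatch h
  | some R =>
    cases R with
    | write a =>
      simp only [step, hA] at hr hp hm
      by_cases hta : t = a
      · rw [if_pos hta] at hr
        simp only [correctRegisterValue, hp, if_pos, hm] at hr
        simp at hr
      · rw [if_neg hta] at hr
        rcases hQ with hQ | hV
        · exact hQ hr ⟨hp, hm⟩
        · rcases hV.2 with h | h | h | ⟨h | h, _⟩ <;> rw [hA] at h <;>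
            first
            | (exact hta (Rule.write.inj (Option.some.inj h)).symm)
            | (exact nomatch h)
    | seduction a =>
      simp only [step, hA] at hm
      exact absurd hm (by decide)
    | marriage a =>
      simp only [step, hA] at hm
      exact absurd hm (by decide)
    | reset =>
      simp only [step, hA] at hp
      exact nomatch hp
    | increase =>
      obtain ⟨v, hpv, hrc, -, -⟩ := E.act_eligible k hk s _ hA
      simp only [step, hA] at hr hp hm
      have hvt : v = t := by rw [hp] at hpv; exact (Option.some.inj hpv).symm
      subst hvt
      have hm1 : (E.conf k).m s = 1 := fin3_add_eq_two hm
      rw [hr] at hrc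
      simp only [correctRegisterValue, hp, hm1] at hrc
      simp at hrc

/-- If `m_s = 2` before and after a transition, `p_s` is unchanged. -/
lemma pconst {V : Type} [LinearOrder V] {G : SimpleGraph V} (E : Execution G)
    (s : V) (l : ℕ) (hl : l < E.T)
    (h1 : (E.conf l).m s = 2) (h2 : (E.conf (l + 1)).m s = 2) :
    (E.conf (l + 1)).p s = (E.conf l).p s := by
  rw [E.conf_succ l hl] at h2 ⊢
  cases hA : E.act l s with
  | none => simp only [step, hA]
  | some R =>
    cases R with
    | write a => simp only [step, hA]
    | seduction a => simp only [step, hA] at h2; exact absurd h2 (by decide)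
    | marriage a => simp only [step, hA] at h2; exact absurd h2 (by decide)
    | reset => simp only [step, hA] at h2; exact absurd h2 (by decide)
    | increase =>
      simp only [step, hA] at h2
      rw [h1] at h2
      exact absurd h2 (by decide)

/-- If `s` executed at least one `t`-rule before `L_0 =
conf i`, `r_{st} = (You,0)` in `L_0`, and `(p_s,m_s) = (t,2)` in `L_1 = conf j`
(with `L_0 ↦* L_1`), then `s` executes a `t`-`Increase` setting `m_s = 2`
between `L_0` and `L_1`. -/
theorem stmt_13 {V : Type} [Fintype V] [LinearOrder V] (G : SimpleGraph V)
    (s t : V) (hadj : G.Adj s t) (hst : s < t) (E : Execution G)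
    (i j : ℕ) (hij : i ≤ j) (hjT : j ≤ E.T)
    (hpre : ∃ k, k + 1 ≤ i ∧ execVRule E k s t)
    (hL0 : (E.conf i).r s t = (RegFlag.You, 0))
    (hL1p : (E.conf j).p s = some t) (hL1m : (E.conf j).m s = 2) :
    ∃ k, i ≤ k ∧ k + 1 ≤ j ∧ E.act k s = some Rule.increase ∧
      (E.conf k).p s = some t ∧ (E.conf (k + 1)).m s = 2 := by
  obtain ⟨k0, hk0i, hV⟩ := hpre
  -- Q0 holds at every configuration from k0+1 up to i
  have hQi : Q0 (E.conf i) s t := by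
    have key : ∀ l, k0 + 1 ≤ l → l ≤ i → Q0 (E.conf l) s t := by
      intro l hl
      induction l, hl using Nat.le_induction with
      | base => intro _; exact q0_step E s t k0 hV.1 (Or.inr hV)
      | succ l hl ih =>
        intro hli
        have hlT : l < E.T := lt_of_lt_of_le (lt_of_lt_of_le (Nat.lt_succ_self l) hli)
          (le_trans hij hjT)
        exact q0_step E s t l hlT (Or.inl (ih (le_of_lt (lt_of_lt_of_le (Nat.lt_succ_self l) hli))))
    exact key i hk0i le_rfl
  have hQi' := hQi hL0
  -- there is some l in [i,j] with m_s ≠ 2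
  have hex : ∃ l, l ≤ j ∧ (i ≤ l ∧ (E.conf l).m s ≠ 2) := by
    by_contra hcon
    push_neg at hcon
    -- then m_s = 2 throughout [i,j], so p_s is constant on [i,j]
    have hall2 : ∀ l, i ≤ l → l ≤ j → (E.conf l).m s = 2 := fun l hil hlj => hcon l hlj hil
    have hpc : ∀ l, i ≤ l → l ≤ j → (E.conf l).p s = (E.conf i).p s := by
      intro l hl
      induction l, hl using Nat.le_induction with
      | base => intro _; rfl
      | succ l hl ih =>
        intro hlj
        have hlT : l < E.T := lt_of_lt_of_le (lt_of_lt_of_le (Nat.lt_succ_self l) hlj) hjT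
        rw [pconst E s l hlT (hall2 l hl (le_of_lt (lt_of_lt_of_le (Nat.lt_succ_self l) hlj)))
          (hall2 (l + 1) (le_trans hl (Nat.le_succ l)) hlj)]
        exact ih (le_of_lt (lt_of_lt_of_le (Nat.lt_succ_self l) hlj))
    have hpi : (E.conf i).p s = some t := by rw [← hpc j hij le_rfl]; exact hL1p
    exact hQi' ⟨hpi, hall2 i le_rfl hij⟩
  obtain ⟨l0, hl0j, hPl0⟩ := hex
  set P : ℕ → Prop := fun l => i ≤ l ∧ (E.conf l).m s ≠ 2 with hP
  have : DecidablePred P := fun l => instDecidableAnd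
  set k := Nat.findGreatest P j with hkdef
  have hPk : P k := Nat.findGreatest_spec hl0j hPl0
  have hkj : k ≤ j := Nat.findGreatest_le j
  have hik : i ≤ k := hPk.1
  have hkltj : k < j := by
    rcases lt_or_eq_of_le hkj with h | h
    · exact h
    · exact absurd hL1m (h ▸ hPk.2)
  have hall : ∀ l, k < l → l ≤ j → (E.conf l).m s = 2 := by
    intro l hkl hlj
    have := Nat.findGreatest_is_greatest (hkdef ▸ hkl) hlj
    simp only [hP] at this
    push_neg at this
    exact this (le_trans hik (le_of_lt hkl))
  have hkT : k < E.T := lt_of_lt_of_le hkltj hjT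
  have hm1 : (E.conf (k + 1)).m s = 2 := hall (k + 1) (Nat.lt_succ_self k) hkltj
  have hsucc := E.conf_succ k hkT
  -- the rule executed at k by s must be Increase
  have hinc : E.act k s = some Rule.increase := by
    cases hA : E.act k s with
    | none => rw [hsucc] at hm1; simp only [step, hA] at hm1; exact absurd hm1 hPk.2
    | some R =>
      cases R with
      | write a => rw [hsucc] at hm1; simp only [step, hA] at hm1; exact absurd hm1 hPk.2
      | seduction a =>
        rw [hsucc] at hm1; simp only [step, hA] at hm1; exact absurd hm1 (by decide)
      | marriage a =>
        rw [hsucc] at hm1; simp only [step, hA] at hm1; exact absurd hm1 (by decide)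
      | reset =>
        rw [hsucc] at hm1; simp only [step, hA] at hm1; exact absurd hm1 (by decide)
      | increase => rfl
  -- p_s is constant on [k+1, j]
  have hpc : ∀ l, k + 1 ≤ l → l ≤ j → (E.conf l).p s = (E.conf (k + 1)).p s := by
    intro l hl
    induction l, hl using Nat.le_induction with
    | base => intro _; rfl
    | succ l hl ih =>
      intro hlj
      have hlT : l < E.T := lt_of_lt_of_le (lt_of_lt_of_le (Nat.lt_succ_self l) hlj) hjT
      rw [pconst E s l hlT
        (hall l (lt_of_lt_of_le (Nat.lt_succ_self k) hl)
          (le_of_lt (lt_of_lt_of_le (Nat.lt_succ_self l) hlj)))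
        (hall (l + 1) (lt_of_lt_of_le (Nat.lt_succ_self k) (le_trans hl (Nat.le_succ l))) hlj)]
      exact ih (le_of_lt (lt_of_lt_of_le (Nat.lt_succ_self l) hlj))
  have hpk1 : (E.conf (k + 1)).p s = some t := by rw [← hpc j hkltj le_rfl]; exact hL1p
  have hpk : (E.conf k).p s = some t := by
    rw [hsucc] at hpk1
    simp only [step, hinc] at hpk1
    exact hpk1
  exact ⟨k, hik, hkltj, hinc, hpk, hm1⟩
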